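/- For all u with 0 ≤ u ≤ 1, (1/(2 ln 2)) ∑_{k=1}^∞ u^k/(k(2k-1)) = 1 - h₂((1-√u)/2). -/

import Mathlib

noncomputable def h2 (x : ℝ) : ℝ := -(x * Real.logb 2 x) - (1 - x) * Real.logb 2 (1 - x)

open Real Filter Topology

noncomputable def Fcl (u : ℝ) : ℝ :=
  (1 + Real.sqrt u) * Real.log (1 + Real.sqrt u)
    + (1 - Real.sqrt u) * Real.log (1 - Real.sqrt u)

lemma key (u : ℝ) (hu0 : 0 ≤ u) (hu1 : u < 1) :
    HasSum (fun k : ℕ => u ^ (k + 1) / (((k : ℝ) + 1) * (2 * ((k : ℝ) + 1) - 1))) (Fcl u) := by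
  set s := Real.sqrt u with hs
  have hsq : s ^ 2 = u := Real.sq_sqrt hu0
  have hs0 : 0 ≤ s := Real.sqrt_nonneg u
  have hs1 : s < 1 := by nlinarith [hsq, hs0]
  have habs : |s| < 1 := by rwa [abs_of_nonneg hs0]
  have habsu : |u| < 1 := by rwa [abs_of_nonneg hu0]
  have h1 := (Real.hasSum_log_sub_log_of_abs_lt_one habs).mul_left s
  have h2' := Real.hasSum_pow_div_log_of_abs_lt_one habsu
  have h3 := h1.sub h2'
  have hfun : (fun k : ℕ => u ^ (k + 1) / (((k : ℝ) + 1) * (2 * ((k : ℝ) + 1) - 1)))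
      = fun k : ℕ => s * ((2 : ℝ) * (1 / (2 * (k : ℝ) + 1)) * s ^ (2 * k + 1))
          - u ^ (k + 1) / ((k : ℝ) + 1) := by
    funext k
    have hup : u ^ (k + 1) = s ^ (2 * k + 1) * s := by
      rw [← hsq, ← pow_mul, show 2 * (k + 1) = (2 * k + 1) + 1 from by ring, pow_succ]
    have hk1 : ((k : ℝ) + 1) ≠ 0 := by positivity
    have hk2 : (2 * (k : ℝ) + 1) ≠ 0 := by positivity
    rw [hup, show 2 * ((k : ℝ) + 1) - 1 = 2 * (k : ℝ) + 1 from by ring]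
    rw [eq_sub_iff_add_eq, div_add_div _ _ (by positivity) hk1, div_eq_iff (by positivity),
      mul_comm]
    field_simp
    ring
  rw [hfun]
  convert h3 using 1
  · rfl
  have hone_sub : (0:ℝ) < 1 - s := by linarith
  have hone_add : (0:ℝ) < 1 + s := by linarith
  have hlogu : Real.log (1 - u) = Real.log (1 - s) + Real.log (1 + s) := by
    rw [show 1 - u = (1 - s) * (1 + s) by rw [← hsq]; ring]
    exact Real.log_mul hone_sub.ne' hone_add.ne'
  rw [Fcl, sub_neg_eq_add, hlogu]
  ring

lemma main_lt (u : ℝ) (hu0 : 0 ≤ u) (hu1 : u < 1) :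
    (1 / (2 * Real.log 2)) *
      ∑' k : ℕ, u ^ (k + 1) / (((k : ℝ) + 1) * (2 * ((k : ℝ) + 1) - 1))
    = 1 - h2 ((1 - Real.sqrt u) / 2) := by
  rw [(key u hu0 hu1).tsum_eq]
  set s := Real.sqrt u with hs
  have hs0 : 0 ≤ s := Real.sqrt_nonneg u
  have hsq : s ^ 2 = u := Real.sq_sqrt hu0
  have hs1 : s < 1 := by nlinarith
  have hone_sub : (0:ℝ) < 1 - s := by linarith
  have hone_add : (0:ℝ) < 1 + s := by linarith
  have hL : Real.log 2 ≠ 0 := by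
    have := Real.log_pos (by norm_num : (1:ℝ) < 2); linarith
  have h2ne : (2:ℝ) ≠ 0 := two_ne_zero
  have e1 : Real.log ((1 - s) / 2) = Real.log (1 - s) - Real.log 2 :=
    Real.log_div hone_sub.ne' h2ne
  have e2 : Real.log ((1 + s) / 2) = Real.log (1 + s) - Real.log 2 :=
    Real.log_div hone_add.ne' h2ne
  rw [Fcl, h2, Real.logb, Real.logb,
    show 1 - (1 - s) / 2 = (1 + s) / 2 by ring, e1, e2]
  field_simp
  ring

lemma summ : Summable (fun k : ℕ => 1 / (((k : ℝ) + 1) * (2 * ((k : ℝ) + 1) - 1))) := by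
  have hg : Summable (fun k : ℕ => 1 / ((k : ℝ) + 1) ^ 2) := by
    have := (summable_nat_add_iff (f := fun n : ℕ => 1 / (n : ℝ) ^ 2) 1).2
      (summable_one_div_nat_pow.mpr one_lt_two)
    simpa using this
  have hp : ∀ k : ℕ, (0:ℝ) < ((k : ℝ) + 1) * (2 * ((k : ℝ) + 1) - 1) := by
    intro k
    have : (0:ℝ) ≤ (k : ℝ) := Nat.cast_nonneg k
    nlinarith
  refine Summable.of_nonneg_of_le (fun k => le_of_lt (one_div_pos.mpr (hp k))) (fun k => ?_) hg
  apply one_div_le_one_div_of_le (by positivity)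
  have : (0:ℝ) ≤ (k : ℝ) := Nat.cast_nonneg k
  nlinarith

lemma sum_at_one :
    HasSum (fun k : ℕ => 1 / (((k : ℝ) + 1) * (2 * ((k : ℝ) + 1) - 1))) (2 * Real.log 2) := by
  have hHS := summ.hasSum
  suffices hkey : (∑' k : ℕ, 1 / (((k : ℝ) + 1) * (2 * ((k : ℝ) + 1) - 1))) = 2 * Real.log 2 by
    rwa [hkey] at hHS
  have habel := Real.tendsto_tsum_powerSeries_nhdsWithin_lt hHS.tendsto_sum_nat
  have hc : Continuous fun u : ℝ => Fcl u := by
    unfold Fcl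
    exact (Real.continuous_mul_log.comp (continuous_const.add Real.continuous_sqrt)).add
      (Real.continuous_mul_log.comp (continuous_const.sub Real.continuous_sqrt))
  have hlim : Tendsto (fun u : ℝ => Fcl u / u) (nhdsWithin 1 (Set.Iio 1))
      (𝓝 (2 * Real.log 2)) := by
    have h1 : Fcl 1 / 1 = 2 * Real.log 2 := by
      simp [Fcl, Real.sqrt_one, Real.log_zero]
      ring
    rw [← h1]
    exact ((hc.continuousAt.div continuousAt_id (by norm_num)).continuousWithinAt)
  have heq : (fun x : ℝ => ∑' n : ℕ, (1 / (((n : ℝ) + 1) * (2 * ((n : ℝ) + 1) - 1))) * x ^ n)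
      =ᶠ[nhdsWithin 1 (Set.Iio 1)] fun u => Fcl u / u := by
    filter_upwards [Ioo_mem_nhdsLT_of_mem (by norm_num : (1:ℝ) ∈ Set.Ioc 0 1)] with u hu
    obtain ⟨hu0, hu1⟩ := hu
    have hk := key u hu0.le hu1
    have hk2 : HasSum (fun k : ℕ =>
        (1 / (((k : ℝ) + 1) * (2 * ((k : ℝ) + 1) - 1))) * u ^ k * u) (Fcl u) := by
      convert hk using 2 with k
      rw [pow_succ]; ring
    have ht := (hk2.div_const u).tsum_eq
    rw [← ht]
    congr 1
    funext k
    exact (mul_div_cancel_right₀ _ hu0.ne').symm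
  exact tendsto_nhds_unique (habel.congr' heq) hlim

theorem stmt_1 (u : ℝ) (hu0 : 0 ≤ u) (hu1 : u ≤ 1) :
    (1 / (2 * Real.log 2)) *
      ∑' k : ℕ, u ^ (k + 1) / (((k : ℝ) + 1) * (2 * ((k : ℝ) + 1) - 1))
    = 1 - h2 ((1 - Real.sqrt u) / 2) := by
  rcases lt_or_eq_of_le hu1 with h | h
  · exact main_lt u hu0 h
  · subst h
    have hL : Real.log 2 ≠ 0 := by
      have := Real.log_pos (by norm_num : (1:ℝ) < 2); linarith
    rw [show ∑' k : ℕ, (1:ℝ) ^ (k + 1) / (((k : ℝ) + 1) * (2 * ((k : ℝ) + 1) - 1))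
        = 2 * Real.log 2 from by simpa using sum_at_one.tsum_eq]
    rw [Real.sqrt_one]
    simp [h2, Real.logb]
    field_simp
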